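/- arXiv:2502.11522 — 5 statements merged into one kernel-verified Lean document; each statement's English description precedes it below -/
import Mathlib

section
/- Let G be a connected simple graph on n ≥ 3 vertices such that every pair of vertices at distance 2 has degree sum at least n. Then G is 2-connected (has no cut-vertex). -/
open SimpleGraph

lemma stmt_2_aux {V : Type*} (G : SimpleGraph V) {z t : V} (p : G.Walk z t) :
    ∀ (hz : z ∈ ({t}ᶜ : Set V)),
      ∃ y : ({t}ᶜ : Set V), (G.induce ({t}ᶜ : Set V)).Reachable ⟨z, hz⟩ y ∧ G.Adj y.val t := by
  induction p with
  | nil => intro hz; simp at hz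
  | @cons a c tt h q ih =>
    intro hz
    by_cases hc : c = tt
    · subst hc; exact ⟨⟨a, hz⟩, Reachable.refl _, h⟩
    · have hc' : c ∈ ({tt}ᶜ : Set V) := by simpa using hc
      obtain ⟨y, hy1, hy2⟩ := ih hc'
      have hadj : (G.induce ({tt}ᶜ : Set V)).Adj ⟨a, hz⟩ ⟨c, hc'⟩ := h
      exact ⟨y, (SimpleGraph.Adj.reachable hadj).trans hy1, hy2⟩

theorem stmt_2 {V : Type*} [Fintype V] [DecidableEq V] (G : SimpleGraph V)
    [DecidableRel G.Adj] (hconn : G.Connected) (hn : 3 ≤ Fintype.card V)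
    (hmu : ∀ u v : V, G.dist u v = 2 → Fintype.card V ≤ G.degree u + G.degree v) :
    ∀ v : V, (G.induce ({v}ᶜ : Set V)).Connected := by
  classical
  intro v
  set H := G.induce ({v}ᶜ : Set V) with hH
  have hadjH : ∀ (x y : ({v}ᶜ : Set V)), H.Adj x y ↔ G.Adj x.val y.val := by
    intro x y; rfl
  have hne : Nonempty ({v}ᶜ : Set V) := by
    obtain ⟨w, hw⟩ := Fintype.exists_ne_of_one_lt_card (by omega) v
    exact ⟨⟨w, by simpa using hw⟩⟩
  rw [SimpleGraph.connected_iff]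
  refine ⟨?_, hne⟩
  intro a b
  by_contra hab
  -- every vertex of H can reach some vertex adjacent to v
  have key : ∀ (x : ({v}ᶜ : Set V)), ∃ y : ({v}ᶜ : Set V),
      H.Reachable x y ∧ G.Adj y.val v := by
    intro x
    obtain ⟨p⟩ := hconn x.val v
    exact stmt_2_aux G p x.2
  obtain ⟨a', ha1, ha2⟩ := key a
  obtain ⟨b', hb1, hb2⟩ := key b
  set A : Finset V :=
    Finset.univ.filter (fun x => ∃ hx : x ∈ ({v}ᶜ : Set V), H.Reachable a ⟨x, hx⟩) with hA
  set B : Finset V :=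
    Finset.univ.filter (fun x => ∃ hx : x ∈ ({v}ᶜ : Set V), H.Reachable b ⟨x, hx⟩) with hB
  have hvA : v ∉ A := by simp [hA]
  have hvB : v ∉ B := by simp [hB]
  have hdisj : Disjoint A B := by
    rw [Finset.disjoint_left]
    intro x hx hx'
    rw [hA, Finset.mem_filter] at hx
    rw [hB, Finset.mem_filter] at hx'
    obtain ⟨-, hx1, hx2⟩ := hx
    obtain ⟨-, hx3, hx4⟩ := hx'
    exact hab (hx2.trans hx4.symm)
  -- neighbor bound
  have nbr : ∀ (x : ({v}ᶜ : Set V)), H.Reachable a x →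
      G.neighborFinset x.val ⊆ (A.erase x.val) ∪ {v} := by
    intro x hx y hy
    rw [SimpleGraph.mem_neighborFinset] at hy
    by_cases hyv : y = v
    · simp [hyv]
    · have hy' : y ∈ ({v}ᶜ : Set V) := by simpa using hyv
      have : H.Reachable a ⟨y, hy'⟩ :=
        hx.trans (SimpleGraph.Adj.reachable ((hadjH x ⟨y, hy'⟩).2 hy))
      have hyA : y ∈ A := by
        rw [hA, Finset.mem_filter]; exact ⟨Finset.mem_univ _, hy', this⟩
      have hne : y ≠ x.val := fun h => G.irrefl (h ▸ hy)
      exact Finset.mem_union_left _ (Finset.mem_erase.2 ⟨hne, hyA⟩)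
  have nbrB : ∀ (x : ({v}ᶜ : Set V)), H.Reachable b x →
      G.neighborFinset x.val ⊆ (B.erase x.val) ∪ {v} := by
    intro x hx y hy
    rw [SimpleGraph.mem_neighborFinset] at hy
    by_cases hyv : y = v
    · simp [hyv]
    · have hy' : y ∈ ({v}ᶜ : Set V) := by simpa using hyv
      have : H.Reachable b ⟨y, hy'⟩ :=
        hx.trans (SimpleGraph.Adj.reachable ((hadjH x ⟨y, hy'⟩).2 hy))
      have hyB : y ∈ B := by
        rw [hB, Finset.mem_filter]; exact ⟨Finset.mem_univ _, hy', this⟩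
      have hne : y ≠ x.val := fun h => G.irrefl (h ▸ hy)
      exact Finset.mem_union_left _ (Finset.mem_erase.2 ⟨hne, hyB⟩)
  have haA : a'.val ∈ A := by
    rw [hA, Finset.mem_filter]
    exact ⟨Finset.mem_univ _, a'.2, by simpa using ha1⟩
  have hbB : b'.val ∈ B := by
    rw [hB, Finset.mem_filter]
    exact ⟨Finset.mem_univ _, b'.2, by simpa using hb1⟩
  -- degree bounds
  have degA : G.degree a'.val ≤ A.card := by
    rw [← SimpleGraph.card_neighborFinset_eq_degree]
    calc (G.neighborFinset a'.val).card ≤ ((A.erase a'.val) ∪ {v}).card :=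
          Finset.card_le_card (nbr a' ha1)
      _ ≤ (A.erase a'.val).card + 1 := by
          simpa using Finset.card_union_le (A.erase a'.val) {v}
      _ = A.card := by
          rw [Finset.card_erase_of_mem haA]
          have : 1 ≤ A.card := Finset.card_pos.2 ⟨a'.val, haA⟩
          omega
  have degB : G.degree b'.val ≤ B.card := by
    rw [← SimpleGraph.card_neighborFinset_eq_degree]
    calc (G.neighborFinset b'.val).card ≤ ((B.erase b'.val) ∪ {v}).card :=
          Finset.card_le_card (nbrB b' hb1)
      _ ≤ (B.erase b'.val).card + 1 := by
          simpa using Finset.card_union_le (B.erase b'.val) {v}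
      _ = B.card := by
          rw [Finset.card_erase_of_mem hbB]
          have : 1 ≤ B.card := Finset.card_pos.2 ⟨b'.val, hbB⟩
          omega
  -- dist a' b' = 2
  have hne' : a'.val ≠ b'.val := by
    intro h
    have : a' = b' := Subtype.ext h
    exact hab (ha1.trans (this ▸ hb1.symm))
  have hnadj : ¬ G.Adj a'.val b'.val := by
    intro h
    exact hab (ha1.trans ((SimpleGraph.Adj.reachable
      ((hadjH a' b').2 h)).trans hb1.symm))
  have hdist : G.dist a'.val b'.val = 2 := by
    have hle : G.dist a'.val b'.val ≤ 2 := by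
      have hd := SimpleGraph.dist_le (Walk.cons ha2 (Walk.cons hb2.symm Walk.nil))
      simpa using hd
    have hre : G.Reachable a'.val b'.val :=
      ⟨Walk.cons ha2 (Walk.cons hb2.symm Walk.nil)⟩
    have h0 : G.dist a'.val b'.val ≠ 0 := by
      intro h
      rcases (SimpleGraph.dist_eq_zero_iff_eq_or_not_reachable).1 h with h' | h'
      · exact hne' h'
      · exact h' hre
    have h1 : G.dist a'.val b'.val ≠ 1 := by
      intro h
      exact hnadj ((SimpleGraph.dist_eq_one_iff_adj).1 h)
    omega
  have hcard := hmu a'.val b'.val hdist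
  -- counting contradiction
  have hsub : A ∪ B ∪ {v} ⊆ Finset.univ := Finset.subset_univ _
  have hAB : (A ∪ B ∪ {v}).card = A.card + B.card + 1 := by
    rw [Finset.card_union_of_disjoint, Finset.card_union_of_disjoint hdisj]
    · simp
    · rw [Finset.disjoint_singleton_right]
      simp [Finset.mem_union, hvA, hvB]
  have hlt : A.card + B.card + 1 ≤ Fintype.card V := by
    rw [← hAB]
    simpa using Finset.card_le_card hsub
  omega
end

section
/- Let G be a connected simple graph on n ≥ 3 vertices with μ₂(G) ≥ n. If {u, v} is a 2-element vertex cut of G, then G − {u, v} has exactly two connected components. -/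
open SimpleGraph

private lemma reach_boundary {V : Type*} (G : SimpleGraph V) (S : Set V) :
    ∀ (a c : V) (p : G.Walk a c) (ha : a ∈ S) (_ : c ∉ S),
    ∃ (x : V) (hx : x ∈ S) (w : V), w ∉ S ∧
      (G.induce S).Reachable ⟨x, hx⟩ ⟨a, ha⟩ ∧ G.Adj x w := by
  intro a c p
  induction p with
  | nil => intro ha hc; exact absurd ha hc
  | @cons a b c h p ih =>
    intro ha hc
    by_cases hb : b ∈ S
    · obtain ⟨x, hx, w, hw, hr, hadj⟩ := ih hb hc
      refine ⟨x, hx, w, hw, hr.trans ?_, hadj⟩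
      exact SimpleGraph.Adj.reachable (by simpa using h.symm)
    · exact ⟨a, ha, b, hb, Reachable.refl _, h⟩

private lemma key_contra {V : Type*} [Fintype V] [DecidableEq V] (G : SimpleGraph V)
    [DecidableRel G.Adj] (hconn : G.Connected) (hn : 3 ≤ Fintype.card V)
    (hmu : ∀ u v : V, G.dist u v = 2 → Fintype.card V ≤ G.degree u + G.degree v)
    (u v : V)
    (x y z : V) (hx : x ∈ ({u, v} : Set V)ᶜ) (hy : y ∈ ({u, v} : Set V)ᶜ)
    (hz : z ∈ ({u, v} : Set V)ᶜ)
    (nxy : ¬ (G.induce (({u, v} : Set V)ᶜ)).Reachable ⟨x, hx⟩ ⟨y, hy⟩)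
    (nxz : ¬ (G.induce (({u, v} : Set V)ᶜ)).Reachable ⟨x, hx⟩ ⟨z, hz⟩)
    (nyz : ¬ (G.induce (({u, v} : Set V)ᶜ)).Reachable ⟨y, hy⟩ ⟨z, hz⟩)
    (w : V) (hxw : G.Adj x w) (hyw : G.Adj y w) : False := by
  have hxy : x ≠ y := by
    rintro rfl; exact nxy (Reachable.refl _)
  have hxz : x ≠ z := by
    rintro rfl; exact nxz (Reachable.refl _)
  have hyz : y ≠ z := by
    rintro rfl; exact nyz (Reachable.refl _)
  have hnadj : ¬ G.Adj x y := by
    intro h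
    exact nxy (SimpleGraph.Adj.reachable (by simpa using h))
  have hdist : G.dist x y = 2 := by
    have h2 : G.dist x y ≤ 2 := by
      simpa using SimpleGraph.dist_le
        (SimpleGraph.Walk.cons hxw (SimpleGraph.Walk.cons hyw.symm .nil))
    have h0 : 0 < G.dist x y := hconn.pos_dist_of_ne hxy
    have h1 : G.dist x y ≠ 1 := fun h => hnadj (SimpleGraph.dist_eq_one_iff_adj.mp h)
    omega
  have hdeg := hmu x y hdist
  -- intersection of neighborhoods is inside {u, v}
  have hInter : G.neighborFinset x ∩ G.neighborFinset y ⊆ {u, v} := by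
    intro t ht
    simp only [Finset.mem_inter, SimpleGraph.mem_neighborFinset] at ht
    by_contra htuv
    have htS : t ∈ ({u, v} : Set V)ᶜ := by
      simp only [Set.mem_compl_iff, Set.mem_insert_iff, Set.mem_singleton_iff]
      simpa [not_or] using htuv
    apply nxy
    have r1 : (G.induce (({u, v} : Set V)ᶜ)).Reachable ⟨x, hx⟩ ⟨t, htS⟩ :=
      SimpleGraph.Adj.reachable (by simpa using ht.1)
    have r2 : (G.induce (({u, v} : Set V)ᶜ)).Reachable ⟨t, htS⟩ ⟨y, hy⟩ :=
      SimpleGraph.Adj.reachable (by simpa using ht.2.symm)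
    exact r1.trans r2
  -- union of neighborhoods avoids x, y, z
  have hUnion : G.neighborFinset x ∪ G.neighborFinset y ⊆
      Finset.univ \ {x, y, z} := by
    intro t ht
    simp only [Finset.mem_union, SimpleGraph.mem_neighborFinset] at ht
    simp only [Finset.mem_sdiff, Finset.mem_univ, true_and, Finset.mem_insert,
      Finset.mem_singleton, not_or]
    refine ⟨?_, ?_, ?_⟩
    · rintro rfl
      rcases ht with h | h
      · exact G.loopless.irrefl _ h
      · exact hnadj h.symm
    · rintro rfl
      rcases ht with h | h
      · exact hnadj h
      · exact G.loopless.irrefl _ h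
    · rintro rfl
      rcases ht with h | h
      · exact nxz (SimpleGraph.Adj.reachable (by simpa using h))
      · exact nyz (SimpleGraph.Adj.reachable (by simpa using h))
  have hc1 : (G.neighborFinset x ∪ G.neighborFinset y).card ≤ Fintype.card V - 3 := by
    have := Finset.card_le_card hUnion
    have hcard3 : ({x, y, z} : Finset V).card = 3 := by
      rw [Finset.card_insert_of_notMem (by simp [hxy, hxz]),
        Finset.card_insert_of_notMem (by simp [hyz])]
      simp
    rwa [Finset.card_sdiff_of_subset (Finset.subset_univ _), Finset.card_univ, hcard3] at this
  have hc2 : (G.neighborFinset x ∩ G.neighborFinset y).card ≤ 2 := by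
    calc (G.neighborFinset x ∩ G.neighborFinset y).card ≤ ({u, v} : Finset V).card :=
          Finset.card_le_card hInter
      _ ≤ 2 := by
          apply le_trans (Finset.card_insert_le _ _)
          simp
  have hsum : G.degree x + G.degree y =
      (G.neighborFinset x ∪ G.neighborFinset y).card +
      (G.neighborFinset x ∩ G.neighborFinset y).card := by
    rw [SimpleGraph.degree, SimpleGraph.degree]
    exact (Finset.card_union_add_card_inter _ _).symm
  omega

theorem stmt_3 {V : Type*} [Fintype V] [DecidableEq V] (G : SimpleGraph V)
    [DecidableRel G.Adj] (hconn : G.Connected) (hn : 3 ≤ Fintype.card V)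
    (hmu : ∀ u v : V, G.dist u v = 2 → Fintype.card V ≤ G.degree u + G.degree v)
    (u v : V) (huv : u ≠ v)
    (hcut : ¬ (G.induce (({u, v} : Set V)ᶜ)).Preconnected) :
    Nat.card (G.induce (({u, v} : Set V)ᶜ)).ConnectedComponent = 2 := by
  classical
  have : Fintype (G.induce (({u, v} : Set V)ᶜ)).ConnectedComponent := Fintype.ofFinite _
  rw [Nat.card_eq_fintype_card]
  have hlow : 1 < Fintype.card (G.induce (({u, v} : Set V)ᶜ)).ConnectedComponent := by
    rw [Fintype.one_lt_card_iff_nontrivial]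
    rw [SimpleGraph.Preconnected] at hcut
    push_neg at hcut
    obtain ⟨a, b, hab⟩ := hcut
    exact ⟨(G.induce (({u, v} : Set V)ᶜ)).connectedComponentMk a,
      (G.induce (({u, v} : Set V)ᶜ)).connectedComponentMk b,
      fun h => hab (SimpleGraph.ConnectedComponent.exact h)⟩
  have hhigh : ¬ 2 < Fintype.card (G.induce (({u, v} : Set V)ᶜ)).ConnectedComponent := by
    intro h
    obtain ⟨c₁, c₂, c₃, h12, h13, h23⟩ := Fintype.two_lt_card_iff.mp h
    obtain ⟨a₁, rfl⟩ := c₁.exists_rep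
    obtain ⟨a₂, rfl⟩ := c₂.exists_rep
    obtain ⟨a₃, rfl⟩ := c₃.exists_rep
    obtain ⟨p₁⟩ := hconn.preconnected a₁.1 u
    obtain ⟨p₂⟩ := hconn.preconnected a₂.1 u
    obtain ⟨p₃⟩ := hconn.preconnected a₃.1 u
    obtain ⟨x₁, hx₁, w₁, hw₁, hr₁, hadjw₁⟩ :=
      reach_boundary G (({u, v} : Set V)ᶜ) a₁.1 u p₁ a₁.2 (by simp)
    have hadj₁ : G.Adj x₁ u ∨ G.Adj x₁ v := by
      simp only [Set.notMem_compl_iff, Set.mem_insert_iff, Set.mem_singleton_iff] at hw₁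
      rcases hw₁ with rfl | rfl
      · exact Or.inl hadjw₁
      · exact Or.inr hadjw₁
    obtain ⟨x₂, hx₂, w₂, hw₂, hr₂, hadjw₂⟩ :=
      reach_boundary G (({u, v} : Set V)ᶜ) a₂.1 u p₂ a₂.2 (by simp)
    have hadj₂ : G.Adj x₂ u ∨ G.Adj x₂ v := by
      simp only [Set.notMem_compl_iff, Set.mem_insert_iff, Set.mem_singleton_iff] at hw₂
      rcases hw₂ with rfl | rfl
      · exact Or.inl hadjw₂
      · exact Or.inr hadjw₂
    obtain ⟨x₃, hx₃, w₃, hw₃, hr₃, hadjw₃⟩ :=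
      reach_boundary G (({u, v} : Set V)ᶜ) a₃.1 u p₃ a₃.2 (by simp)
    have hadj₃ : G.Adj x₃ u ∨ G.Adj x₃ v := by
      simp only [Set.notMem_compl_iff, Set.mem_insert_iff, Set.mem_singleton_iff] at hw₃
      rcases hw₃ with rfl | rfl
      · exact Or.inl hadjw₃
      · exact Or.inr hadjw₃
    have n12 : ¬ (G.induce (({u, v} : Set V)ᶜ)).Reachable ⟨x₁, hx₁⟩ ⟨x₂, hx₂⟩ := by
      intro hr
      exact h12 (SimpleGraph.ConnectedComponent.sound ((hr₁.symm.trans hr).trans hr₂))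
    have n13 : ¬ (G.induce (({u, v} : Set V)ᶜ)).Reachable ⟨x₁, hx₁⟩ ⟨x₃, hx₃⟩ := by
      intro hr
      exact h13 (SimpleGraph.ConnectedComponent.sound ((hr₁.symm.trans hr).trans hr₃))
    have n23 : ¬ (G.induce (({u, v} : Set V)ᶜ)).Reachable ⟨x₂, hx₂⟩ ⟨x₃, hx₃⟩ := by
      intro hr
      exact h23 (SimpleGraph.ConnectedComponent.sound ((hr₂.symm.trans hr).trans hr₃))
    rcases hadj₁ with h1 | h1 <;> rcases hadj₂ with h2 | h2 <;> rcases hadj₃ with h3 | h3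
    · exact key_contra G hconn hn hmu u v x₁ x₂ x₃ hx₁ hx₂ hx₃ n12 n13 n23 u h1 h2
    · exact key_contra G hconn hn hmu u v x₁ x₂ x₃ hx₁ hx₂ hx₃ n12 n13 n23 u h1 h2
    · exact key_contra G hconn hn hmu u v x₁ x₃ x₂ hx₁ hx₃ hx₂ n13 n12
        (fun hr => n23 hr.symm) u h1 h3
    · exact key_contra G hconn hn hmu u v x₂ x₃ x₁ hx₂ hx₃ hx₁ n23
        (fun hr => n12 hr.symm) (fun hr => n13 hr.symm) v h2 h3
    · exact key_contra G hconn hn hmu u v x₂ x₃ x₁ hx₂ hx₃ hx₁ n23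
        (fun hr => n12 hr.symm) (fun hr => n13 hr.symm) u h2 h3
    · exact key_contra G hconn hn hmu u v x₁ x₃ x₂ hx₁ hx₃ hx₂ n13 n12
        (fun hr => n23 hr.symm) v h1 h3
    · exact key_contra G hconn hn hmu u v x₁ x₂ x₃ hx₁ hx₂ hx₃ n12 n13 n23 v h1 h2
    · exact key_contra G hconn hn hmu u v x₁ x₂ x₃ hx₁ hx₂ hx₃ n12 n13 n23 v h1 h2
  omega
end

section
/- Let G be a connected simple graph on n vertices with μ₂(G) ≥ n. Let x, y be vertices with dist(x,y) = 2 chosen so that |N(x) ∩ N(y)| is minimum among all pairs at distance 2. Set M = N(x) ∩ N(y) and D = V(G) \ ({x,y} ∪ N(x) ∪ N(y)). Then |D| ≤ |M| − 2. -/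
open SimpleGraph

theorem stmt_5 {V : Type*} [Fintype V] [DecidableEq V] (G : SimpleGraph V)
    [DecidableRel G.Adj] (hconn : G.Connected)
    (hmu : ∀ u v : V, G.dist u v = 2 → Fintype.card V ≤ G.degree u + G.degree v)
    (x y : V) (hxy : G.dist x y = 2)
    (hmin : ∀ u v : V, G.dist u v = 2 →
      (G.neighborFinset x ∩ G.neighborFinset y).card ≤
        (G.neighborFinset u ∩ G.neighborFinset v).card) :
    (Set.univ \ ({x, y} ∪ G.neighborSet x ∪ G.neighborSet y)).ncard + 2 ≤
      (G.neighborSet x ∩ G.neighborSet y).ncard := by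
  classical
  have hne : x ≠ y := by
    intro h; subst h; simp [SimpleGraph.dist_self] at hxy
  have hnadj : ¬ G.Adj x y := by
    intro h
    have : G.dist x y = 1 := dist_eq_one_iff_adj.mpr h
    omega
  set Nx := G.neighborFinset x with hNx
  set Ny := G.neighborFinset y with hNy
  set A : Finset V := ({x, y} : Finset V) ∪ (Nx ∪ Ny) with hA
  set Df : Finset V := Finset.univ \ A with hD
  have hDset : (Set.univ \ ({x, y} ∪ G.neighborSet x ∪ G.neighborSet y) : Set V) = ↑Df := by
    ext v
    simp [hD, hA, hNx, hNy, Set.mem_diff, or_assoc]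
  have hMset : (G.neighborSet x ∩ G.neighborSet y : Set V) = ↑(Nx ∩ Ny) := by
    ext v; simp [hNx, hNy]
  rw [hDset, hMset, Set.ncard_coe_finset, Set.ncard_coe_finset]
  have hdisj : Disjoint ({x, y} : Finset V) (Nx ∪ Ny) := by
    simp only [Finset.disjoint_left, Finset.mem_insert, Finset.mem_singleton,
      Finset.mem_union, hNx, hNy, mem_neighborFinset]
    rintro a (rfl | rfl)
    · rintro (h | h)
      · exact G.irrefl h
      · exact hnadj h.symm
    · rintro (h | h)
      · exact hnadj h
      · exact G.irrefl h
  have hcardA : A.card = 2 + (Nx ∪ Ny).card := by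
    rw [hA, Finset.card_union_of_disjoint hdisj, Finset.card_insert_of_notMem (by simp [hne]),
      Finset.card_singleton]
  have hIE : (Nx ∪ Ny).card + (Nx ∩ Ny).card = G.degree x + G.degree y := by
    rw [Finset.card_union_add_card_inter, hNx, hNy, card_neighborFinset_eq_degree,
      card_neighborFinset_eq_degree]
  have hsplit : Df.card + A.card = Fintype.card V := by
    rw [hD]
    rw [Finset.card_sdiff_add_card_eq_card (Finset.subset_univ A), Finset.card_univ]
  have hcardle : Fintype.card V ≤ G.degree x + G.degree y := hmu x y hxy
  omega
end

section
/- The complete bipartite graph K_{3,3} does not have two completely independent spanning trees. -/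
open SimpleGraph

def crossSubgraph {V : Type*} (G : SimpleGraph V) (A B : Set V) : SimpleGraph V where
  Adj a b := G.Adj a b ∧ ((a ∈ A ∧ b ∈ B) ∨ (a ∈ B ∧ b ∈ A))
  symm := by
    constructor
    rintro a b ⟨h, hc | hc⟩
    · exact ⟨h.symm, Or.inr ⟨hc.2, hc.1⟩⟩
    · exact ⟨h.symm, Or.inl ⟨hc.2, hc.1⟩⟩
  loopless := ⟨fun a h => G.irrefl h.1⟩

/-- Every component of `H` that contains an edge also contains a cycle
    (i.e. `H`, viewed as the edge-induced subgraph, has no tree component). -/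
def NoTreeComponent {V : Type*} (H : SimpleGraph V) : Prop :=
  ∀ v : V, (∃ w, H.Adj v w) →
    ∃ w, H.Reachable v w ∧ ∃ c : H.Walk w w, c.IsCycle

def IsCIST2Partition {V : Type*} (G : SimpleGraph V) (A B : Set V) : Prop :=
  A ∪ B = Set.univ ∧ Disjoint A B ∧
  (G.induce A).Connected ∧ (G.induce B).Connected ∧
  NoTreeComponent (crossSubgraph G A B)

/-- `T 0, …, T (k-1)` are `k` completely independent spanning trees of `G`. -/
def AreCISTs {V : Type*} (G : SimpleGraph V) {k : ℕ} (T : Fin k → SimpleGraph V) : Prop :=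
  (∀ i, T i ≤ G ∧ (T i).IsTree) ∧
  ∀ i j, i ≠ j → ∀ u v : V, ∀ (p : (T i).Walk u v) (q : (T j).Walk u v),
    p.IsPath → q.IsPath →
      (∀ e ∈ p.edges, e ∉ q.edges) ∧
      (∀ w ∈ p.support, w ∈ q.support → w = u ∨ w = v)

def HasKCISTs {V : Type*} (G : SimpleGraph V) (k : ℕ) : Prop :=
  ∃ T : Fin k → SimpleGraph V, AreCISTs G T

instance : DecidableRel (completeBipartiteGraph (Fin 3) (Fin 3)).Adj :=
  fun _ _ => inferInstanceAs (Decidable (_ ∨ _))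

lemma aux_card9 : (completeBipartiteGraph (Fin 3) (Fin 3)).edgeFinset.card = 9 := by
  decide

theorem stmt_11 : ¬ HasKCISTs (completeBipartiteGraph (Fin 3) (Fin 3)) 2 := by
  classical
  rintro ⟨T, ⟨htree, hind⟩⟩
  -- the two trees are edge-disjoint
  have hdisj : Disjoint (T 0).edgeFinset (T 1).edgeFinset := by
    rw [Finset.disjoint_left]
    intro e h0 h1
    rw [SimpleGraph.mem_edgeFinset] at h0 h1
    induction e using Sym2.ind with
    | _ u v =>
      rw [SimpleGraph.mem_edgeSet] at h0 h1
      have key := (hind 0 1 (by decide) u v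
        (SimpleGraph.Walk.cons h0 SimpleGraph.Walk.nil)
        (SimpleGraph.Walk.cons h1 SimpleGraph.Walk.nil)
        (by simp [h0.ne]) (by simp [h1.ne])).1
      exact key s(u,v) (by simp) (by simp)
  have hcard : ∀ i : Fin 2, (T i).edgeFinset.card = 5 := by
    intro i
    have := (htree i).2.card_edgeFinset
    simp only [Fintype.card_sum, Fintype.card_fin] at this
    omega
  have hsub : (T 0).edgeFinset ∪ (T 1).edgeFinset ⊆
      (completeBipartiteGraph (Fin 3) (Fin 3)).edgeFinset := by
    apply Finset.union_subset <;>
      exact SimpleGraph.edgeFinset_mono (htree _).1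
  have h9 : (completeBipartiteGraph (Fin 3) (Fin 3)).edgeFinset.card = 9 := by
    rw [SimpleGraph.edgeFinset_card]
    have h' := aux_card9
    rw [SimpleGraph.edgeFinset_card] at h'
    exact (Fintype.card_congr (Equiv.refl _)).trans h'
  have := Finset.card_le_card hsub
  rw [Finset.card_union_of_disjoint hdisj, hcard 0, hcard 1, h9] at this
  omega
end

section
/- Let G be a connected simple graph on n ≥ 7 vertices with μ₂(G) ≥ n, and suppose x, y are vertices at distance 2 with N(x) ∩ N(y) = {u₁, u₂} of size exactly 2, where d(u₁) = d(u₂) = 3 would hold. Then this situation is impossible, i.e., at least one of u₁, u₂ has degree at least 4. -/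
open SimpleGraph

lemma dist_two_aux {V : Type*} (G : SimpleGraph V) {a b c : V}
    (hne : a ≠ b) (hnadj : ¬ G.Adj a b) (h1 : G.Adj a c) (h2 : G.Adj c b) :
    G.dist a b = 2 := by
  have hle : G.dist a b ≤ 2 := by
    have := G.dist_le (h1.toWalk.append h2.toWalk)
    simpa using this
  have h0 : G.dist a b ≠ 0 := fun h =>
    hne ((Reachable.dist_eq_zero_iff ⟨h1.toWalk.append h2.toWalk⟩).mp h)
  have h1' : G.dist a b ≠ 1 := fun h => hnadj (dist_eq_one_iff_adj.mp h)
  omega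

theorem stmt_15 {V : Type*} [Fintype V] [DecidableEq V] (G : SimpleGraph V)
    [DecidableRel G.Adj] (hconn : G.Connected) (hn : 7 ≤ Fintype.card V)
    (hmu : ∀ u v : V, G.dist u v = 2 → Fintype.card V ≤ G.degree u + G.degree v)
    (x y u₁ u₂ : V) (hxy : G.dist x y = 2) (hu : u₁ ≠ u₂)
    (hM : G.neighborSet x ∩ G.neighborSet y = {u₁, u₂}) :
    4 ≤ G.degree u₁ ∨ 4 ≤ G.degree u₂ := by
  have hcu : (Finset.univ : Finset V).card = Fintype.card V := Finset.card_univ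
  by_contra hcon
  push_neg at hcon
  obtain ⟨hd1, hd2⟩ := hcon
  -- basic facts about x, y
  have hxyne : x ≠ y := by
    intro h; rw [h, G.dist_self] at hxy; omega
  have hxynadj : ¬ G.Adj x y := by
    intro h; rw [← dist_eq_one_iff_adj] at h; omega
  -- membership facts
  have hmem : ∀ w : V, (G.Adj x w ∧ G.Adj y w) ↔ (w = u₁ ∨ w = u₂) := by
    intro w
    have := Set.ext_iff.mp hM w
    simpa [Set.mem_inter_iff, mem_neighborSet] using this
  have hu1 : G.Adj x u₁ ∧ G.Adj y u₁ := (hmem u₁).mpr (Or.inl rfl)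
  have hu2 : G.Adj x u₂ ∧ G.Adj y u₂ := (hmem u₂).mpr (Or.inr rfl)
  have hu1x : u₁ ≠ x := fun h => G.irrefl (h ▸ hu1.1)
  have hu1y : u₁ ≠ y := fun h => G.irrefl (h ▸ hu1.2)
  have hu2x : u₂ ≠ x := fun h => G.irrefl (h ▸ hu2.1)
  have hu2y : u₂ ≠ y := fun h => G.irrefl (h ▸ hu2.2)
  -- u₁ and u₂ are adjacent
  have hu12 : G.Adj u₁ u₂ := by
    by_contra hna
    have : G.dist u₁ u₂ = 2 :=
      dist_two_aux G hu hna hu1.1.symm hu2.1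
    have := hmu u₁ u₂ this
    omega
  -- neighborFinset u₁ = {x, y, u₂}
  have hsub1 : ({x, y, u₂} : Finset V) ⊆ G.neighborFinset u₁ := by
    intro w hw
    simp only [Finset.mem_insert, Finset.mem_singleton] at hw
    rw [mem_neighborFinset]
    rcases hw with h | h | h
    · exact h ▸ hu1.1.symm
    · exact h ▸ hu1.2.symm
    · exact h ▸ hu12
  have hcard3 : ({x, y, u₂} : Finset V).card = 3 := by
    rw [Finset.card_insert_of_notMem, Finset.card_insert_of_notMem] <;>
      simp [hxyne, hu2x.symm, hu2y.symm]
  have hN1 : G.neighborFinset u₁ = {x, y, u₂} := by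
    apply (Finset.eq_of_subset_of_card_le hsub1 _).symm
    rw [hcard3, ← G.card_neighborFinset_eq_degree] at *
    omega
  have hsub2 : ({x, y, u₁} : Finset V) ⊆ G.neighborFinset u₂ := by
    intro w hw
    simp only [Finset.mem_insert, Finset.mem_singleton] at hw
    rw [mem_neighborFinset]
    rcases hw with h | h | h
    · exact h ▸ hu2.1.symm
    · exact h ▸ hu2.2.symm
    · exact h ▸ hu12.symm
  have hcard3' : ({x, y, u₁} : Finset V).card = 3 := by
    rw [Finset.card_insert_of_notMem, Finset.card_insert_of_notMem] <;>
      simp [hxyne, hu1x.symm, hu1y.symm]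
  have hN2 : G.neighborFinset u₂ = {x, y, u₁} := by
    apply (Finset.eq_of_subset_of_card_le hsub2 _).symm
    rw [hcard3', ← G.card_neighborFinset_eq_degree] at *
    omega
  -- N(x) ∪ N(y) = univ \ {x, y}
  have hinter : G.neighborFinset x ∩ G.neighborFinset y = {u₁, u₂} := by
    ext w
    simp only [Finset.mem_inter, mem_neighborFinset, Finset.mem_insert,
      Finset.mem_singleton]
    exact hmem w
  have hunion_sub : G.neighborFinset x ∪ G.neighborFinset y ⊆
      Finset.univ \ {x, y} := by
    intro w hw
    simp only [Finset.mem_union, mem_neighborFinset] at hw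
    simp only [Finset.mem_sdiff, Finset.mem_univ, true_and, Finset.mem_insert,
      Finset.mem_singleton]
    push_neg
    constructor
    · rintro rfl; rcases hw with h | h
      · exact G.irrefl h
      · exact hxynadj h.symm
    · rintro rfl; rcases hw with h | h
      · exact hxynadj h
      · exact G.irrefl h
  have hmuxy := hmu x y hxy
  have hcard_sdiff : (Finset.univ \ ({x, y} : Finset V)).card =
      Fintype.card V - 2 := by
    rw [Finset.card_sdiff_of_subset (by simp)]
    simp [Finset.card_insert_of_notMem, hxyne]
  have hunion_eq : G.neighborFinset x ∪ G.neighborFinset y =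
      Finset.univ \ {x, y} := by
    apply Finset.eq_of_subset_of_card_le hunion_sub
    have h1 := Finset.card_union_add_card_inter (G.neighborFinset x)
      (G.neighborFinset y)
    rw [hinter] at h1
    have hic : ({u₁, u₂} : Finset V).card = 2 := by
      simp [Finset.card_insert_of_notMem, hu]
    rw [hic] at h1
    rw [hcard_sdiff]
    rw [← G.card_neighborFinset_eq_degree, ← G.card_neighborFinset_eq_degree]
      at hmuxy
    omega
  -- pick w outside {x, y, u₁, u₂}
  have hcard4 : ({x, y, u₁, u₂} : Finset V).card ≤ 4 := by
    apply le_trans (Finset.card_insert_le _ _)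
    apply Nat.succ_le_succ
    apply le_trans (Finset.card_insert_le _ _)
    apply Nat.succ_le_succ
    apply le_trans (Finset.card_insert_le _ _)
    simp
  have hex : (Finset.univ \ ({x, y, u₁, u₂} : Finset V)).Nonempty := by
    rw [← Finset.card_pos, Finset.card_sdiff_of_subset (by simp)]
    have := Finset.card_le_univ ({x, y, u₁, u₂} : Finset V)
    omega
  obtain ⟨w, hw⟩ := hex
  simp only [Finset.mem_sdiff, Finset.mem_univ, true_and, Finset.mem_insert,
    Finset.mem_singleton] at hw
  push_neg at hw
  obtain ⟨hwx, hwy, hwu1, hwu2⟩ := hw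
  -- w is adjacent to x or y
  have hwin : w ∈ G.neighborFinset x ∪ G.neighborFinset y := by
    rw [hunion_eq]
    simp [hwx, hwy]
  rw [Finset.mem_union, mem_neighborFinset, mem_neighborFinset] at hwin
  -- w is not adjacent to u₁ nor u₂
  have hnadj1 : ¬ G.Adj u₁ w := by
    rw [← mem_neighborFinset, hN1]
    simp [hwx, hwy, hwu2]
  have hnadj2 : ¬ G.Adj u₂ w := by
    rw [← mem_neighborFinset, hN2]
    simp [hwx, hwy, hwu1]
  -- dist u₁ w = 2
  have hdist : G.dist u₁ w = 2 := by
    rcases hwin with h | h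
    · exact dist_two_aux G (Ne.symm hwu1) hnadj1 hu1.1.symm h
    · exact dist_two_aux G (Ne.symm hwu1) hnadj1 hu1.2.symm h
  have hdw := hmu u₁ w hdist
  -- degree w ≥ n - 3, but N(w) ⊆ univ \ {w, u₁, u₂}
  have hNw_sub : G.neighborFinset w ⊆ Finset.univ \ ({w, u₁, u₂} : Finset V) := by
    intro v hv
    rw [mem_neighborFinset] at hv
    simp only [Finset.mem_sdiff, Finset.mem_univ, true_and, Finset.mem_insert,
      Finset.mem_singleton]
    push_neg
    refine ⟨fun h => G.irrefl (h ▸ hv), fun h => hnadj1 (h ▸ hv).symm,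
      fun h => hnadj2 (h ▸ hv).symm⟩
  have hc3 : ({w, u₁, u₂} : Finset V).card = 3 := by
    rw [Finset.card_insert_of_notMem, Finset.card_insert_of_notMem] <;>
      simp [hwu1, hwu2, hu]
  have hNw_eq : G.neighborFinset w = Finset.univ \ ({w, u₁, u₂} : Finset V) := by
    apply Finset.eq_of_subset_of_card_le hNw_sub
    rw [Finset.card_sdiff_of_subset (by simp), hc3, G.card_neighborFinset_eq_degree]
    omega
  -- then w adjacent to both x and y, so w ∈ {u₁, u₂}: contradiction
  have hxw : G.Adj x w := by
    have : x ∈ G.neighborFinset w := by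
      rw [hNw_eq]
      simp [Ne.symm hwx, hu1x, hu2x]
      tauto
    exact (mem_neighborFinset _ _ _).mp this |>.symm
  have hyw : G.Adj y w := by
    have : y ∈ G.neighborFinset w := by
      rw [hNw_eq]
      simp [Ne.symm hwy, hu1y, hu2y]
      tauto
    exact (mem_neighborFinset _ _ _).mp this |>.symm
  rcases (hmem w).mp ⟨hxw, hyw⟩ with h | h
  · exact hwu1 h
  · exact hwu2 h
end
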